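/- arXiv:2501.15667 — 4 statements merged into one kernel-verified Lean document; each statement's English description precedes it below -/
import Mathlib

section
/- For every positive integer n, every rational number c, and every number of variables N ≥ n + 2, the polynomial M_{(2,1^n)} + c·M_{(1^{n+2})} in the polynomial ring ℚ[x_1, …, x_N] is not a symmetric polynomial (i.e., it is not invariant under every permutation of the variables x_1, …, x_N). (This is the content of the paper's Lemma that the quasisymmetric Schur function S_{(2,1^n)} does not lie in the algebra of symmetric functions, after expanding it as M_{(2,1^n)} plus a scalar multiple of M_{(1^{n+2})}.) -/
set_option maxHeartbeats 1000000

open Classical in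
/-- The monomial quasisymmetric polynomial `M_α` in `N` variables:
the sum over strictly increasing tuples `i₁ < i₂ < ⋯ < i_{ℓ(α)}` of
`x_{i₁}^{α₁} ⋯ x_{i_ℓ}^{α_ℓ}`. -/
noncomputable def monQSym (N : ℕ) (α : List ℕ) : MvPolynomial (Fin N) ℚ :=
  ∑ f ∈ Finset.univ.filter (fun f : Fin α.length → Fin N => StrictMono f),
    ∏ i : Fin α.length, (MvPolynomial.X (f i)) ^ α.get i

namespace QSAux

open MvPolynomial Finsupp

variable {k N : ℕ}

/-- exponent vector of the tuple `f` with exponents `a`. -/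
noncomputable def E (a : Fin k → ℕ) (f : Fin k → Fin N) : Fin N →₀ ℕ :=
  ∑ i, Finsupp.single (f i) (a i)

lemma E_apply (a : Fin k → ℕ) {f : Fin k → Fin N} (hf : Function.Injective f) (j : Fin k) :
    E a f (f j) = a j := by
  classical
  simp only [E, Finsupp.finset_sum_apply, Finsupp.single_apply]
  rw [Finset.sum_eq_single j]
  · simp
  · intro i _ hij
    simp [hf.ne hij]
  · simp

lemma E_apply_notin (a : Fin k → ℕ) (f : Fin k → Fin N) {x : Fin N}
    (hx : ∀ i, f i ≠ x) : E a f x = 0 := by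
  classical
  simp only [E, Finsupp.finset_sum_apply, Finsupp.single_apply]
  exact Finset.sum_eq_zero fun i _ => if_neg (hx i)

lemma exists_of_E_ne (a : Fin k → ℕ) (f : Fin k → Fin N) {x : Fin N}
    (hx : E a f x ≠ 0) : ∃ i, f i = x := by
  by_contra h
  push_neg at h
  exact hx (E_apply_notin a f h)

lemma strictMono_eq_of_E_eq {a : Fin k → ℕ} (ha : ∀ i, 0 < a i)
    {f g : Fin k → Fin N} (hf : StrictMono f) (hg : StrictMono g)
    (h : E a f = E a g) : f = g := by
  classical
  set s : Finset (Fin N) := Finset.univ.image g with hs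
  have hcard : s.card = k := by
    rw [hs, Finset.card_image_of_injective _ hg.injective, Finset.card_univ, Fintype.card_fin]
  have hfs : ∀ x, f x ∈ s := by
    intro j
    have : E a g (f j) ≠ 0 := by
      rw [← h, E_apply a hf.injective]
      exact (ha j).ne'
    obtain ⟨i, hi⟩ := exists_of_E_ne a g this
    exact hi ▸ Finset.mem_image_of_mem g (Finset.mem_univ i)
  have hgs : ∀ x, g x ∈ s := fun j => Finset.mem_image_of_mem g (Finset.mem_univ j)
  rw [Finset.orderEmbOfFin_unique hcard hfs hf, Finset.orderEmbOfFin_unique hcard hgs hg]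

open Classical in
lemma coeff_monQSym (N : ℕ) (α : List ℕ) (d : Fin N →₀ ℕ) :
    MvPolynomial.coeff d (monQSym N α) =
      ∑ f ∈ Finset.univ.filter (fun f : Fin α.length → Fin N => StrictMono f),
        if E α.get f = d then (1 : ℚ) else 0 := by
  unfold monQSym
  rw [MvPolynomial.coeff_sum]
  refine Finset.sum_congr rfl fun f _ => ?_
  have : (∏ i : Fin α.length, (MvPolynomial.X (f i) : MvPolynomial (Fin N) ℚ) ^ α.get i)
      = monomial (E α.get f) 1 := by
    simp only [X_pow_eq_monomial, E, monomial_sum_one]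
  rw [this, coeff_monomial]

end QSAux

open QSAux MvPolynomial Finsupp in
open Classical in
/-- For every positive integer `n`, every rational `c`, and every number of variables
`N ≥ n + 2`, the polynomial `M_{(2,1^n)} + c • M_{(1^{n+2})}` in `ℚ[x_1, …, x_N]` is
not a symmetric polynomial. -/
theorem quasiSchur_hook_not_symmetric (n : ℕ) (hn : 1 ≤ n) (c : ℚ) (N : ℕ) (hN : n + 2 ≤ N) :
    ¬ MvPolynomial.IsSymmetric
        (monQSym N (2 :: List.replicate n 1) + c • monQSym N (List.replicate (n + 2) 1)) := by
  intro hsym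
  set α : List ℕ := 2 :: List.replicate n 1 with hα
  set β : List ℕ := List.replicate (n + 2) 1 with hβ
  have hlenα : α.length = n + 1 := by simp [hα]
  have hlenβ : β.length = n + 2 := by simp [hβ]
  -- facts about the exponent lists
  have haget : ∀ i : Fin α.length, α.get i = if (i : ℕ) = 0 then 2 else 1 := by
    intro i
    rcases i with ⟨iv, hiv⟩
    cases iv with
    | zero => rfl
    | succ m =>
      show (2 :: List.replicate n 1)[m+1] = 1
      simp
  have hapos : ∀ i : Fin α.length, 0 < α.get i := by
    intro i; rw [haget i]; split <;> norm_num
  have hbget : ∀ i : Fin β.length, β.get i = 1 := by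
    intro i; simp [hβ, List.getElem_replicate]
  -- the canonical tuple g and the swapped tuple h
  have hnN : n < N := by omega
  have hNpos : 0 < N := by omega
  set x0 : Fin N := ⟨0, hNpos⟩ with hx0
  set xN : Fin N := ⟨n, hnN⟩ with hxN
  set g : Fin α.length → Fin N := fun i => ⟨(i : ℕ), by have := i.isLt; omega⟩ with hg
  have hgmono : StrictMono g := fun i j hij => Fin.mk_lt_mk.mpr hij
  set σ : Equiv.Perm (Fin N) := Equiv.swap x0 xN with hσ
  set h : Fin α.length → Fin N := fun i => σ (g i) with hh
  have hhinj : Function.Injective h := σ.injective.comp hgmono.injective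
  set d : Fin N →₀ ℕ := E α.get g with hd
  set d' : Fin N →₀ ℕ := E α.get h with hd'
  have hmap : Finsupp.mapDomain σ d = d' := by
    rw [hd, hd', E, E, Finsupp.mapDomain_finset_sum]
    exact Finset.sum_congr rfl fun i _ => Finsupp.mapDomain_single
  -- index zero and index n in Fin α.length
  have h0lt : 0 < α.length := by omega
  have hnlt : n < α.length := by omega
  set i0 : Fin α.length := ⟨0, h0lt⟩ with hi0
  set iN : Fin α.length := ⟨n, hnlt⟩ with hiN
  have hai0 : α.get i0 = 2 := by simp only [haget i0]; rfl
  have haiN : α.get iN = 1 := by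
    simp only [haget iN]
    rw [if_neg]
    show ¬ (n = 0); omega
  have hgi0 : g i0 = x0 := by simp [hg, hi0, hx0]
  have hgiN : g iN = xN := by simp [hg, hiN, hxN]
  have hhi0 : h i0 = xN :=
    (congrArg σ hgi0).trans (by rw [hσ]; exact Equiv.swap_apply_left _ _)
  have hhiN : h iN = x0 :=
    (congrArg σ hgiN).trans (by rw [hσ]; exact Equiv.swap_apply_right _ _)
  -- d and d' have value 2 somewhere
  have hd2 : d x0 = 2 := by
    rw [hd, ← hgi0, E_apply _ hgmono.injective, hai0]
  have hd'2 : d' xN = 2 := by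
    rw [hd', ← hhi0, E_apply _ hhinj, hai0]
  have hd'0 : d' x0 = 1 := by
    rw [hd', ← hhiN, E_apply _ hhinj, haiN]
  -- coefficient computations
  have hcβ : ∀ e : Fin N →₀ ℕ, (∃ x, e x = 2) → MvPolynomial.coeff e (monQSym N β) = 0 := by
    intro e ⟨x, hx⟩
    rw [coeff_monQSym]
    refine Finset.sum_eq_zero fun f hf => ?_
    rw [if_neg]
    intro hEf
    rcases eq_or_ne (E β.get f x) 0 with h0 | h0
    · rw [hEf, hx] at h0; norm_num at h0
    · obtain ⟨i, hi⟩ := exists_of_E_ne _ _ h0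
      have := E_apply β.get (Finset.mem_filter.1 hf).2.injective i
      rw [hi, hEf, hx, hbget] at this
      norm_num at this
  have hcαd : MvPolynomial.coeff d (monQSym N α) = 1 := by
    rw [coeff_monQSym]
    rw [Finset.sum_eq_single_of_mem g (by simp [hgmono])]
    · rw [if_pos hd.symm]
    · intro f hf hfg
      rw [if_neg]
      intro hEf
      exact hfg (strictMono_eq_of_E_eq hapos (Finset.mem_filter.1 hf).2 hgmono (hEf.trans hd))
  have hcαd' : MvPolynomial.coeff d' (monQSym N α) = 0 := by
    rw [coeff_monQSym]
    refine Finset.sum_eq_zero fun f hf => ?_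
    have hfmono := (Finset.mem_filter.1 hf).2
    rw [if_neg]
    intro hEf
    -- value 2 at ⟨n⟩ forces f i0 = ⟨n⟩
    have h2 : E α.get f xN = 2 := by rw [hEf, hd'2]
    obtain ⟨i, hi⟩ := exists_of_E_ne α.get f (x := xN) (by rw [h2]; omega)
    have hai : α.get i = 2 := by
      have := E_apply α.get hfmono.injective i
      rw [hi, h2] at this; omega
    have hival : (i : ℕ) = 0 := by
      by_contra hne
      rw [haget, if_neg hne] at hai; norm_num at hai
    -- value 1 at 0 forces some f j = 0 with j ≠ i0, contradiction with strict mono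
    have h1 : E α.get f x0 = 1 := by rw [hEf, hd'0]
    obtain ⟨j, hj⟩ := exists_of_E_ne α.get f (x := x0) (by rw [h1]; omega)
    have hij : i ≠ j := by
      intro hij
      rw [hij, hj] at hi
      have : n = 0 := by simpa using congrArg Fin.val hi.symm
      omega
    have hjne : (j : ℕ) ≠ 0 := fun h0 => hij (Fin.ext (by rw [hival, h0]))
    have hilt : i < j := by rw [Fin.lt_def, hival]; omega
    have hlt := hfmono hilt
    rw [hi, hj, hx0, hxN, Fin.lt_def] at hlt
    simp at hlt
  -- symmetry gives coeff d = coeff d'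
  set p := monQSym N α + c • monQSym N β with hp
  have hren : (rename σ) p = p := hsym σ
  have hcoeff : MvPolynomial.coeff d' p = MvPolynomial.coeff d p := by
    rw [← hmap, ← hren, MvPolynomial.coeff_rename_mapDomain σ σ.injective, hren]
  rw [hp] at hcoeff
  simp only [MvPolynomial.coeff_add, MvPolynomial.coeff_smul] at hcoeff
  rw [hcαd, hcαd', hcβ d ⟨_, hd2⟩, hcβ d' ⟨_, hd'2⟩] at hcoeff
  norm_num at hcoeff
end

section
/- Let n ≥ 1 and suppose (Ψ_α), indexed by the compositions α of n and valued in the ring of formal power series over ℚ in countably many commuting variables, is a type-1 quasisymmetric power sum family for n. Then n! · M_{(1^n)} = Σ_{α ⊨ n} (−1)^{n − ℓ(α)} (n!/z_α) Ψ_α, where the sum runs over all compositions α of n. -/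
/-- The set of partial sums `α₁ + ⋯ + α_j` for `1 ≤ j ≤ ℓ(α)` (including the total sum). -/
def psums (α : List ℕ) : Finset ℕ :=
  (Finset.range α.length).image (fun i => (α.take (i + 1)).sum)

/-- The descent set `Set(α) = {α₁, α₁+α₂, …, α₁+⋯+α_{ℓ(α)-1}}` of a composition `α`. -/
def descSet (α : List ℕ) : Finset ℕ :=
  (Finset.range (α.length - 1)).image (fun i => (α.take (i + 1)).sum)

/-- When `α ⪰ β`, the last entry of the block `β^{(j)}` of `β` ending at the partial sum
`s = α₁ + ⋯ + α_j` equals `s` minus the largest partial sum of `β` strictly below `s`. -/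
def lastBlockEntry (β : List ℕ) (s : ℕ) : ℕ :=
  s - ((insert 0 (psums β)).filter (· < s)).sup id

/-- `lp(β, α)`: the product over the blocks `β^{(j)}` of `β` determined by `α ⪰ β`
of the last entry of `β^{(j)}`. -/
def lpProd (β α : List ℕ) : ℕ := ∏ s ∈ psums α, lastBlockEntry β s

/-- `z_α = ∏_i i^{m_i} m_i!`, where `m_i` is the number of parts of `α` equal to `i`. -/
def zComp (α : List ℕ) : ℕ :=
  ∏ i ∈ α.toFinset, i ^ α.count i * (α.count i).factorial

/-- The monomial quasisymmetric function `M_α` in the ring of formal power series over `ℚ`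
in countably many commuting variables `x_0, x_1, x_2, …`: the coefficient of a monomial is
`1` exactly when the exponents of its variables, listed in increasing order of the
variables, form the composition `α`. -/
noncomputable def Mqs (α : List ℕ) : MvPowerSeries ℕ ℚ :=
  fun d => if (d.support.sort (· ≤ ·)).map d = α then 1 else 0

open Classical in
/-- `Ψ` is a type-1 quasisymmetric power sum family for `n`: for every composition `β` of
`n`, `M_β = Σ_{α ⪰ β} (−1)^{ℓ(β) − ℓ(α)} (lp(β,α)/z_α) Ψ_α`. -/
noncomputable def IsType1PowerSumFamily (n : ℕ) (Ψ : Composition n → MvPowerSeries ℕ ℚ) : Prop :=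
  ∀ β : Composition n,
    Mqs β.blocks =
      ∑ α ∈ Finset.univ.filter
          (fun α : Composition n => descSet α.blocks ⊆ descSet β.blocks),
        ((-1 : ℚ) ^ (β.length - α.length) * ((lpProd β.blocks α.blocks : ℚ) / (zComp α.blocks : ℚ))) • Ψ α

lemma length_le_sum_of_one_le (l : List ℕ) (h : ∀ x ∈ l, 1 ≤ x) : l.length ≤ l.sum := by
  induction l with
  | nil => simp
  | cons a t ih =>
    have h1 := h a (by simp)
    have h2 := ih (fun x hx => h x (by simp [hx]))
    simp only [List.length_cons, List.sum_cons]
    omega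

lemma psums_replicate (n : ℕ) :
    psums (List.replicate n 1) = (Finset.range n).image (fun i => i + 1) := by
  unfold psums
  rw [List.length_replicate]
  apply Finset.image_congr
  intro i hi
  simp only [Finset.mem_coe, Finset.mem_range, List.length_replicate] at hi ⊢
  rw [List.take_replicate, List.sum_replicate]
  simp
  omega

lemma lastBlockEntry_replicate (n s : ℕ) (h1 : 1 ≤ s) (h2 : s ≤ n) :
    lastBlockEntry (List.replicate n 1) s = 1 := by
  unfold lastBlockEntry
  have h3 : insert 0 (psums (List.replicate n 1)) = Finset.range (n + 1) := by
    rw [psums_replicate]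
    ext x
    simp only [Finset.mem_insert, Finset.mem_image, Finset.mem_range]
    constructor
    · rintro (rfl | ⟨a, ha, rfl⟩) <;> omega
    · intro hx
      rcases Nat.eq_zero_or_pos x with rfl | h
      · exact Or.inl rfl
      · exact Or.inr ⟨x - 1, by omega, by omega⟩
  rw [h3]
  have h4 : (Finset.range (n + 1)).filter (· < s) = Finset.range s := by
    ext x; simp only [Finset.mem_filter, Finset.mem_range]; omega
  rw [h4]
  have h5 : (Finset.range s).sup id = s - 1 := by
    apply le_antisymm
    · exact Finset.sup_le fun b hb => by simp only [Finset.mem_range] at hb; simp [id]; omega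
    · exact Finset.le_sup (f := id) (by simp only [Finset.mem_range]; omega)
  omega

lemma mem_psums_bounds {n : ℕ} (c : Composition n) {s : ℕ} (hs : s ∈ psums c.blocks) :
    1 ≤ s ∧ s ≤ n := by
  simp only [psums, Finset.mem_image, Finset.mem_range] at hs
  obtain ⟨i, hi, rfl⟩ := hs
  constructor
  · have h1 : ∀ x ∈ c.blocks.take (i + 1), 1 ≤ x :=
      fun x hx => c.one_le_blocks (List.mem_of_mem_take hx)
    have h2 := length_le_sum_of_one_le _ h1
    have h3 : (c.blocks.take (i + 1)).length = min (i + 1) c.blocks.length := by simp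
    omega
  · calc (c.blocks.take (i + 1)).sum ≤ (c.blocks.take (i + 1)).sum + (c.blocks.drop (i + 1)).sum :=
        Nat.le_add_right _ _
    _ = c.blocks.sum := by rw [← List.sum_append, List.take_append_drop]
    _ = n := c.blocks_sum

lemma lpProd_replicate {n : ℕ} (c : Composition n) :
    lpProd (List.replicate n 1) c.blocks = 1 := by
  unfold lpProd
  rw [Finset.prod_congr rfl (fun s hs => lastBlockEntry_replicate n s
    (mem_psums_bounds c hs).1 (mem_psums_bounds c hs).2)]
  simp

lemma descSet_subset {n : ℕ} (hn : 1 ≤ n) (c : Composition n) :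
    descSet c.blocks ⊆ descSet (List.replicate n 1) := by
  intro s hs
  simp only [descSet, Finset.mem_image, Finset.mem_range] at hs ⊢
  obtain ⟨i, hi, rfl⟩ := hs
  -- bounds: 1 ≤ s and s < n
  have hb : 1 ≤ (c.blocks.take (i + 1)).sum ∧ (c.blocks.take (i + 1)).sum ≤ n := by
    apply mem_psums_bounds c
    simp only [psums, Finset.mem_image, Finset.mem_range]
    exact ⟨i, by omega, rfl⟩
  have hlt : (c.blocks.take (i + 1)).sum < n := by
    have hd : (c.blocks.drop (i + 1)).length = c.blocks.length - (i + 1) := by simp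
    have h1 : ∀ x ∈ c.blocks.drop (i + 1), 1 ≤ x :=
      fun x hx => c.one_le_blocks (List.mem_of_mem_drop hx)
    have h2 := length_le_sum_of_one_le _ h1
    have h3 : (c.blocks.take (i + 1)).sum + (c.blocks.drop (i + 1)).sum = n := by
      rw [← List.sum_append, List.take_append_drop, c.blocks_sum]
    omega
  refine ⟨(c.blocks.take (i + 1)).sum - 1, by simp only [List.length_replicate]; omega, ?_⟩
  rw [List.take_replicate, List.sum_replicate, smul_eq_mul]
  omega

/-- For `n ≥ 1` and a type-1 quasisymmetric power sum family `Ψ` for `n`,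
`n! · M_{(1^n)} = Σ_{α ⊨ n} (−1)^{n − ℓ(α)} (n!/z_α) Ψ_α`. -/
theorem factorial_smul_M_ones (n : ℕ) (hn : 1 ≤ n)
    (Ψ : Composition n → MvPowerSeries ℕ ℚ) (hΨ : IsType1PowerSumFamily n Ψ) :
    (n.factorial : ℚ) • Mqs (List.replicate n 1) =
      ∑ α : Composition n,
        ((-1 : ℚ) ^ (n - α.length) * ((n.factorial : ℚ) / (zComp α.blocks : ℚ))) • Ψ α := by
  classical
  have h := hΨ (Composition.ones n)
  have hblocks : (Composition.ones n).blocks = List.replicate n 1 :=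
    Composition.ones_blocks n
  have hlen : (Composition.ones n).length = n := Composition.ones_length n
  rw [hblocks, hlen] at h
  have hfilter : (Finset.univ.filter
      (fun α : Composition n => descSet α.blocks ⊆ descSet (List.replicate n 1)))
      = Finset.univ :=
    Finset.filter_true_of_mem (fun α _ => descSet_subset hn α)
  rw [hfilter] at h
  rw [h, Finset.smul_sum]
  apply Finset.sum_congr rfl
  intro α _
  rw [smul_smul, lpProd_replicate α]
  congr 1
  push_cast
  ring
end

section
/- Let n ≥ 3 and suppose (Ψ_α), indexed by the compositions α of n and valued in the ring of formal power series over ℚ in countably many commuting variables, is a type-1 quasisymmetric power sum family for n. Then n! · M_{(2,1^{n-2})} = 2 · Σ_{α ⊨ n, α_1 = 2} (−1)^{n − 1 − ℓ(α)} (n!/z_α) Ψ_α + Σ_{α ⊨ n, α_1 > 2} (−1)^{n − 1 − ℓ(α)} (n!/z_α) Ψ_α, where the first sum runs over all compositions α of n with first part equal to 2 and the second over all compositions α of n with first part greater than 2. -/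
section
variable {n : ℕ}

lemma take_sum_beta (n i : ℕ) :
    ((2 :: List.replicate (n-2) 1).take (i+1)).sum = 2 + min i (n-2) := by
  simp [List.take_replicate]

lemma psums_beta (hn : 3 ≤ n) : psums (2 :: List.replicate (n-2) 1) = Finset.Icc 2 n := by
  ext s
  simp only [psums, Finset.mem_image, Finset.mem_range, take_sum_beta, List.length_cons,
    List.length_replicate, Finset.mem_Icc]
  constructor
  · rintro ⟨i, hi, rfl⟩; omega
  · rintro ⟨h2, hn'⟩; exact ⟨s - 2, by omega, by omega⟩

lemma descSet_beta (hn : 3 ≤ n) :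
    descSet (2 :: List.replicate (n-2) 1) = Finset.Icc 2 (n-1) := by
  ext s
  simp only [descSet, Finset.mem_image, Finset.mem_range, take_sum_beta, List.length_cons,
    List.length_replicate, Finset.mem_Icc]
  constructor
  · rintro ⟨i, hi, rfl⟩; omega
  · rintro ⟨h2, hn'⟩; exact ⟨s - 2, by omega, by omega⟩

lemma sizeUpTo_one (α : Composition n) : α.sizeUpTo 1 = α.blocks.headI := by
  rcases hb : α.blocks with _ | ⟨a, t⟩ <;> simp [Composition.sizeUpTo, hb]

lemma mem_psums_comp (α : Composition n) {s : ℕ} :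
    s ∈ psums α.blocks ↔ ∃ i < α.length, α.sizeUpTo (i + 1) = s := by
  simp [psums, Composition.sizeUpTo, Composition.blocks_length, exists_prop]

lemma psums_bounds (α : Composition n) {s : ℕ} (hs : s ∈ psums α.blocks) :
    α.blocks.headI ≤ s ∧ s ≤ n := by
  rw [mem_psums_comp] at hs
  obtain ⟨i, hi, rfl⟩ := hs
  refine ⟨?_, α.sizeUpTo_le _⟩
  rw [← sizeUpTo_one]
  exact α.monotone_sizeUpTo (by omega)

lemma headI_mem_psums (hn : 0 < n) (α : Composition n) : α.blocks.headI ∈ psums α.blocks := by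
  rw [mem_psums_comp]
  have hlen : 0 < α.length := α.length_pos_of_pos hn
  exact ⟨0, hlen, sizeUpTo_one α⟩

end

section
variable {n : ℕ}

lemma mem_descSet_comp (α : Composition n) {s : ℕ} :
    s ∈ descSet α.blocks ↔ ∃ i < α.length - 1, α.sizeUpTo (i + 1) = s := by
  simp [descSet, Composition.sizeUpTo, Composition.blocks_length, exists_prop]

lemma two_le_headI (hn : 3 ≤ n) (α : Composition n)
    (h : descSet α.blocks ⊆ descSet (2 :: List.replicate (n-2) 1)) :
    2 ≤ α.blocks.headI := by
  by_contra hlt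
  have hne : α.blocks ≠ [] := by
    intro he
    have := α.blocks_sum
    rw [he] at this
    simp at this; omega
  obtain ⟨a, t, hb⟩ := List.exists_cons_of_ne_nil hne
  have ha : 0 < a := α.blocks_pos (by rw [hb]; exact List.mem_cons_self)
  have hhead : α.blocks.headI = a := by rw [hb]; rfl
  have ha1 : a = 1 := by omega
  have htne : t ≠ [] := by
    intro he
    have := α.blocks_sum
    rw [hb, he] at this
    simp at this; omega
  have h1 : (1:ℕ) ∈ descSet α.blocks := by
    rw [mem_descSet_comp]
    refine ⟨0, ?_, ?_⟩
    · have : α.length = t.length + 1 := by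
        rw [← Composition.blocks_length, hb]; simp
      have : 0 < t.length := List.length_pos_iff.mpr htne
      omega
    · rw [sizeUpTo_one, hhead, ha1]
  have := h h1
  rw [descSet_beta hn] at this
  simp [Finset.mem_Icc] at this

lemma desc_subset_iff (hn : 3 ≤ n) (α : Composition n) :
    descSet α.blocks ⊆ descSet (2 :: List.replicate (n-2) 1) ↔ 2 ≤ α.blocks.headI := by
  constructor
  · exact two_le_headI hn α
  · intro h2 s hs
    rw [mem_descSet_comp] at hs
    obtain ⟨i, hi, rfl⟩ := hs
    rw [descSet_beta hn, Finset.mem_Icc]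
    constructor
    · calc 2 ≤ α.blocks.headI := h2
        _ = α.sizeUpTo 1 := (sizeUpTo_one α).symm
        _ ≤ α.sizeUpTo (i+1) := α.monotone_sizeUpTo (by omega)
    · have h1 : α.sizeUpTo (i+1) < α.sizeUpTo (i+2) := α.sizeUpTo_strict_mono (by omega)
      have h2' : α.sizeUpTo (i+2) ≤ n := α.sizeUpTo_le _
      omega

lemma lastBlockEntry_beta (hn : 3 ≤ n) {s : ℕ} (h2 : 2 ≤ s) (hsn : s ≤ n) :
    lastBlockEntry (2 :: List.replicate (n-2) 1) s = if s = 2 then 2 else 1 := by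
  rw [lastBlockEntry, psums_beta hn]
  rcases eq_or_lt_of_le h2 with h | h
  · subst h
    have : (insert 0 (Finset.Icc 2 n)).filter (· < 2) = {0} := by
      ext x; simp [Finset.mem_Icc]; omega
    rw [this]; simp
  · have hsup : ((insert 0 (Finset.Icc 2 n)).filter (· < s)).sup id = s - 1 := by
      apply le_antisymm
      · apply Finset.sup_le
        intro x hx
        simp only [Finset.mem_filter] at hx
        simp only [id]
        omega
      · apply Finset.le_sup (f := id)
        simp [Finset.mem_Icc]
        omega
    rw [hsup, if_neg (by omega)]
    omega

lemma lpProd_beta (hn : 3 ≤ n) (α : Composition n) (hh : 2 ≤ α.blocks.headI) :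
    lpProd (2 :: List.replicate (n-2) 1) α.blocks
      = if α.blocks.headI = 2 then 2 else 1 := by
  rw [lpProd]
  rw [Finset.prod_congr rfl (fun s hs => by
    obtain ⟨hs1, hs2⟩ := psums_bounds α hs
    exact lastBlockEntry_beta hn (le_trans hh hs1) hs2)]
  rw [show (fun s => if s = 2 then 2 else 1) = (fun s => if s = 2 then (fun _ => 2) s else 1) from rfl]
  rw [Finset.prod_ite_eq' (psums α.blocks) 2 (fun _ => 2)]
  have hmem : 2 ∈ psums α.blocks ↔ α.blocks.headI = 2 := by
    constructor
    · intro hm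
      have := (psums_bounds α hm).1
      omega
    · intro he
      rw [← he]
      exact headI_mem_psums (by omega) α
  simp [hmem]

end


open Classical in
/-- For `n ≥ 3` and a type-1 quasisymmetric power sum family `Ψ` for `n`,
`n! · M_{(2,1^{n-2})} = 2 Σ_{α ⊨ n, α₁ = 2} (−1)^{n−1−ℓ(α)} (n!/z_α) Ψ_α
+ Σ_{α ⊨ n, α₁ > 2} (−1)^{n−1−ℓ(α)} (n!/z_α) Ψ_α`. -/
theorem factorial_smul_M_hook (n : ℕ) (hn : 3 ≤ n)
    (Ψ : Composition n → MvPowerSeries ℕ ℚ) (hΨ : IsType1PowerSumFamily n Ψ) :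
    (n.factorial : ℚ) • Mqs (2 :: List.replicate (n - 2) 1) =
      (2 : ℚ) • ∑ α ∈ Finset.univ.filter (fun α : Composition n => α.blocks.headI = 2),
          ((-1 : ℚ) ^ (n - 1 - α.length) * ((n.factorial : ℚ) / (zComp α.blocks : ℚ))) • Ψ α
        + ∑ α ∈ Finset.univ.filter (fun α : Composition n => 2 < α.blocks.headI),
          ((-1 : ℚ) ^ (n - 1 - α.length) * ((n.factorial : ℚ) / (zComp α.blocks : ℚ))) • Ψ α := by
  classical
  have hβpos : ∀ {i : ℕ}, i ∈ (2 :: List.replicate (n-2) 1) → 0 < i := by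
    intro i hi
    rcases List.mem_cons.1 hi with h | h
    · omega
    · have := List.eq_of_mem_replicate h; omega
  have hβsum : (2 :: List.replicate (n-2) 1).sum = n := by simp; omega
  let β : Composition n := ⟨2 :: List.replicate (n-2) 1, hβpos, hβsum⟩
  have hβb : β.blocks = 2 :: List.replicate (n-2) 1 := rfl
  have hβlen : β.length = n - 1 := by
    rw [← Composition.blocks_length, hβb]; simp; omega
  have key := hΨ β
  rw [show Mqs (2 :: List.replicate (n - 2) 1) = Mqs β.blocks from rfl, key, Finset.smul_sum]
  simp only [smul_smul]
  have hfilter : (Finset.univ.filter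
        (fun α : Composition n => descSet α.blocks ⊆ descSet β.blocks))
      = Finset.univ.filter (fun α : Composition n => 2 ≤ α.blocks.headI) := by
    apply Finset.filter_congr
    intro α _
    rw [hβb]
    exact desc_subset_iff hn α
  rw [hfilter]
  rw [← Finset.sum_filter_add_sum_filter_not
      (Finset.univ.filter (fun α : Composition n => 2 ≤ α.blocks.headI))
      (fun α => α.blocks.headI = 2)]
  have hA : (Finset.univ.filter (fun α : Composition n => 2 ≤ α.blocks.headI)).filter
      (fun α => α.blocks.headI = 2)
      = Finset.univ.filter (fun α : Composition n => α.blocks.headI = 2) := by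
    ext α; simp only [Finset.mem_filter, Finset.mem_univ, true_and]; omega
  have hB : (Finset.univ.filter (fun α : Composition n => 2 ≤ α.blocks.headI)).filter
      (fun α => ¬ α.blocks.headI = 2)
      = Finset.univ.filter (fun α : Composition n => 2 < α.blocks.headI) := by
    ext α; simp only [Finset.mem_filter, Finset.mem_univ, true_and]; omega
  rw [hA, hB]
  congr 1
  · rw [Finset.smul_sum]
    apply Finset.sum_congr rfl
    intro α hα
    rw [Finset.mem_filter] at hα
    have h2 : α.blocks.headI = 2 := hα.2
    rw [smul_smul]
    congr 1
    rw [lpProd_beta hn α (by omega), if_pos h2, hβlen]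
    push_cast
    ring
  · apply Finset.sum_congr rfl
    intro α hα
    rw [Finset.mem_filter] at hα
    have h2 : 2 < α.blocks.headI := hα.2
    congr 1
    rw [lpProd_beta hn α (by omega), if_neg (by omega), hβlen]
    push_cast
    ring
end

section
/- Let n ≥ 2 and let T be the n × n tridiagonal 0–1 Toeplitz matrix with T_{i,j} = 1 if |i − j| = 1 and T_{i,j} = 0 otherwise. Then the second immanant satisfies d_2(T) = Σ_{σ ∈ S_n} sign(σ) · (f(σ) − 1) · ∏_{i=1}^n T_{i,σ(i)} = (−1)^{n/2 + 1} if n is even, and d_2(T) = 0 if n is odd, where f(σ) denotes the number of fixed points of σ. -/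
/-- The `n × n` tridiagonal 0–1 Toeplitz matrix: `T i j = 1` iff `|i − j| = 1`. -/
def triToeplitz (n : ℕ) : Matrix (Fin n) (Fin n) ℤ :=
  fun i j => if (i : ℕ) + 1 = (j : ℕ) ∨ (j : ℕ) + 1 = (i : ℕ) then 1 else 0

/-- The swap `(2k, 2k+1)` when in range, identity otherwise. -/
def matchSwap (n k : ℕ) : Equiv.Perm (Fin n) :=
  if h : 2*k+1 < n then Equiv.swap ⟨2*k, by omega⟩ ⟨2*k+1, h⟩ else 1

/-- The perfect matching permutation `(0 1)(2 3)⋯`. -/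
def matchPerm (n : ℕ) : Equiv.Perm (Fin n) :=
  ((List.range (n/2)).map (matchSwap n)).prod

lemma matchAux (n : ℕ) : ∀ (m : ℕ), 2*m ≤ n → ∀ i : Fin n,
    ((((List.range m).map (matchSwap n)).prod i : Fin n) : ℕ) =
      if (i:ℕ) < 2*m then (if (i:ℕ) % 2 = 0 then (i:ℕ)+1 else (i:ℕ)-1) else (i:ℕ) := by
  intro m
  induction m with
  | zero => intro _ i; simp
  | succ m ih =>
    intro hm i
    rw [List.range_succ, List.map_append, List.prod_append]
    simp only [List.map_cons, List.map_nil, List.prod_cons, List.prod_nil, mul_one,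
      Equiv.Perm.mul_apply]
    have h2m : 2*m+1 < n := by omega
    have hswap : matchSwap n m = Equiv.swap ⟨2*m, by omega⟩ ⟨2*m+1, h2m⟩ := by
      rw [matchSwap, dif_pos h2m]
    rw [hswap]
    rcases lt_trichotomy (i:ℕ) (2*m) with hlt | heq | hgt
    · have : Equiv.swap (⟨2*m, by omega⟩ : Fin n) ⟨2*m+1, h2m⟩ i = i := by
        apply Equiv.swap_apply_of_ne_of_ne <;>
          · intro h; apply absurd (congrArg Fin.val h); simp; omega
      rw [this, ih (by omega) i]
      split_ifs <;> omega
    · have hi : i = (⟨2*m, by omega⟩ : Fin n) := Fin.ext heq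
      rw [hi, Equiv.swap_apply_left, ih (by omega)]
      simp only [Fin.val_mk]
      split_ifs <;> omega
    · rcases eq_or_lt_of_le (Nat.succ_le_of_lt hgt) with heq1 | hgt1
      · have hi : i = (⟨2*m+1, h2m⟩ : Fin n) := Fin.ext heq1.symm
        rw [hi, Equiv.swap_apply_right, ih (by omega)]
        simp only [Fin.val_mk]
        split_ifs <;> omega
      · have : Equiv.swap (⟨2*m, by omega⟩ : Fin n) ⟨2*m+1, h2m⟩ i = i := by
          apply Equiv.swap_apply_of_ne_of_ne <;>
            · intro h; apply absurd (congrArg Fin.val h); simp; omega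
        rw [this, ih (by omega) i]
        split_ifs <;> omega

lemma matchPerm_apply {n : ℕ} (hn : n % 2 = 0) (i : Fin n) :
    ((matchPerm n i : Fin n) : ℕ) = if (i:ℕ) % 2 = 0 then (i:ℕ)+1 else (i:ℕ)-1 := by
  rw [matchPerm, matchAux n (n/2) (by omega) i, if_pos (by omega)]

lemma matchPerm_sign {n : ℕ} (hn : n % 2 = 0) :
    Equiv.Perm.sign (matchPerm n) = (-1) ^ (n/2) := by
  rw [matchPerm, map_list_prod]
  have hall : ∀ x ∈ (List.map (matchSwap n) (List.range (n/2))).map Equiv.Perm.sign,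
      x = -1 := by
    intro x hx
    simp only [List.map_map, List.mem_map, List.mem_range, Function.comp] at hx
    obtain ⟨k, hk, rfl⟩ := hx
    have h2k : 2*k+1 < n := by omega
    rw [matchSwap, dif_pos h2k]
    apply Equiv.Perm.sign_swap
    intro h; exact absurd (congrArg Fin.val h) (by simp)
  rw [List.prod_eq_pow_card _ (-1) hall]
  simp

/-- If every entry along `σ` is nonzero, `σ` is forced. -/
lemma key {n : ℕ} (σ : Equiv.Perm (Fin n))
    (h : ∀ i : Fin n, (i:ℕ)+1 = (σ i).val ∨ (σ i).val+1 = (i:ℕ)) :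
    ∀ k : ℕ, ∀ hk : k < n, (σ ⟨k, hk⟩).val = if k % 2 = 0 then k+1 else k-1 := by
  intro k
  induction k using Nat.strong_induction_on with
  | _ k ih =>
    intro hk
    by_cases hev : k % 2 = 0
    · rw [if_pos hev]
      rcases h ⟨k, hk⟩ with h1 | h1 <;> simp only [Fin.val_mk] at h1
      · omega
      · -- σ k = k - 1, impossible
        exfalso
        have hk2 : 2 ≤ k := by omega
        have h3 := ih (k-2) (by omega) (by omega)
        rw [if_pos (by omega)] at h3
        have heq : σ ⟨k-2, by omega⟩ = σ ⟨k, hk⟩ := Fin.ext (by omega)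
        have h4 := congrArg Fin.val (σ.injective heq)
        simp only [Fin.val_mk] at h4
        omega
    · rw [if_neg hev]
      have hk1 : 1 ≤ k := by omega
      rcases h ⟨k, hk⟩ with h1 | h1 <;> simp only [Fin.val_mk] at h1
      · -- σ k = k+1; derive contradiction via who maps to k-1
        exfalso
        obtain ⟨j, hj⟩ := σ.surjective ⟨k-1, by omega⟩
        have hjv := congrArg Fin.val hj
        simp only [Fin.val_mk] at hjv
        rcases h j with h2 | h2
        · -- (j:ℕ) + 1 = k - 1, so j = k - 2, odd
          have hk3 : 3 ≤ k := by omega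
          have hjk : (j:ℕ) = k - 2 := by omega
          have h3 := ih (k-2) (by omega) (by omega)
          rw [if_neg (by omega)] at h3
          have : j = (⟨k-2, by omega⟩ : Fin n) := Fin.ext hjk
          rw [this] at hjv
          omega
        · -- σ j + 1 = j : then j = k, but σ k = k+1
          have hjk : (j:ℕ) = k := by omega
          have : j = (⟨k, hk⟩ : Fin n) := Fin.ext hjk
          rw [this] at hjv
          omega
      · omega

lemma prod_eq_zero_of_bad {n : ℕ} (σ : Equiv.Perm (Fin n))
    (hall : ¬ ∀ i : Fin n, (i:ℕ)+1 = (σ i).val ∨ (σ i).val+1 = (i:ℕ)) :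
    ∏ i : Fin n, triToeplitz n i (σ i) = 0 := by
  push_neg at hall
  obtain ⟨i, hi1, hi2⟩ := hall
  exact Finset.prod_eq_zero (Finset.mem_univ i)
    (by rw [triToeplitz]; exact if_neg (not_or.mpr ⟨hi1, hi2⟩))

open Classical in
/-- For `n ≥ 2`, the second immanant
`d₂(T) = Σ_σ sign(σ)(f(σ) − 1) ∏ᵢ T_{i,σ(i)}` of the tridiagonal 0–1 Toeplitz matrix
equals `(−1)^{n/2+1}` when `n` is even and `0` when `n` is odd (`f(σ)` is the number of
fixed points of `σ`). -/
theorem secondImmanant_triToeplitz (n : ℕ) (hn : 2 ≤ n) :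
    ∑ σ : Equiv.Perm (Fin n),
        (Equiv.Perm.sign σ : ℤ) *
          (((Finset.univ.filter (fun i : Fin n => σ i = i)).card : ℤ) - 1) *
          ∏ i : Fin n, triToeplitz n i (σ i) =
      if Even n then (-1 : ℤ) ^ (n / 2 + 1) else 0 := by
  by_cases hpar : Even n
  · rw [if_pos hpar]
    have hn2 : n % 2 = 0 := Nat.even_iff.mp hpar
    rw [Finset.sum_eq_single (matchPerm n)]
    · have hfix : (Finset.univ.filter (fun i : Fin n => matchPerm n i = i)).card = 0 := by
        rw [Finset.card_eq_zero, Finset.filter_eq_empty_iff]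
        intro i _ hcontra
        have h1 := congrArg Fin.val hcontra
        rw [matchPerm_apply hn2] at h1
        split_ifs at h1 <;> omega
      have hprod : ∏ i : Fin n, triToeplitz n i (matchPerm n i) = 1 := by
        apply Finset.prod_eq_one
        intro i _
        rw [triToeplitz]
        apply if_pos
        have h1 := matchPerm_apply hn2 i
        split_ifs at h1 with hE
        · left; omega
        · right; omega
      rw [hfix, hprod, matchPerm_sign hn2]
      push_cast
      rw [pow_succ]
      ring
    · intro σ _ hne
      by_cases hall : ∀ i : Fin n, (i:ℕ)+1 = (σ i).val ∨ (σ i).val+1 = (i:ℕ)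
      · exfalso
        apply hne
        apply Equiv.ext
        intro i
        apply Fin.ext
        have h1 := key σ hall i.val i.isLt
        have h2 := matchPerm_apply hn2 i
        simp only [Fin.eta] at h1
        rw [h1, h2]
      · rw [prod_eq_zero_of_bad σ hall, mul_zero]
    · intro h; exact absurd (Finset.mem_univ _) h
  · rw [if_neg hpar]
    have hn2 : n % 2 = 1 := Nat.odd_iff.mp (Nat.not_even_iff_odd.mp hpar)
    apply Finset.sum_eq_zero
    intro σ _
    by_cases hall : ∀ i : Fin n, (i:ℕ)+1 = (σ i).val ∨ (σ i).val+1 = (i:ℕ)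
    · exfalso
      have h1 := key σ hall (n-1) (by omega)
      rw [if_pos (by omega)] at h1
      have := (σ ⟨n-1, by omega⟩).isLt
      omega
    · rw [prod_eq_zero_of_bad σ hall, mul_zero]
end
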